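/- Let H be a finite dimensional Hopf algebra over k, λ a right integral on H with λ(Λ)=1 for a left cointegral Λ, and α_H the distinguished grouplike element of H*. Then for all a, b ∈ H: λ(ab) = α_H(S(b₍₁₎)) λ(S²(b₍₂₎) a). -/

import Mathlib

open Coalgebra TensorProduct HopfAlgebra

namespace RadfordAux

variable {k H : Type*} [Field k] [Ring H] [HopfAlgebra k H]

local notation "S'" => HopfAlgebra.antipode (R := k) (A := H)
local notation "ε" => Coalgebra.counit (R := k)
local notation "Δ" => Coalgebra.comul (R := k)

variable {k H : Type*} [Field k] [Ring H] [HopfAlgebra k H]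

local notation "S'" => HopfAlgebra.antipode (R := k) (A := H)
local notation "ε" => Coalgebra.counit (R := k)
local notation "Δ" => Coalgebra.comul (R := k)

lemma sum_smul_left_eq (a : H) {ιr : Type*} (r : Coalgebra.Repr k a ιr) :
    ∑ i ∈ r.index, ε (r.left i) • r.right i = a := by
  have h := congrArg (TensorProduct.lid k H) (sum_counit_tmul_eq r)
  simp only [map_sum, TensorProduct.lid_tmul, one_smul] at h
  exact h

lemma sum_smul_right_eq (a : H) {ιr : Type*} (r : Coalgebra.Repr k a ιr) :
    ∑ i ∈ r.index, ε (r.right i) • r.left i = a := by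
  have h := congrArg (TensorProduct.rid k H) (sum_tmul_counit_eq r)
  simp only [map_sum, TensorProduct.rid_tmul, one_smul] at h
  exact h

lemma antipode_one' : S' (1 : H) = 1 := by
  have h := HopfAlgebra.mul_antipode_rTensor_comul_apply (R := k) (a := (1 : H))
  simpa [Algebra.TensorProduct.one_def] using h

lemma comul_mul_repr (x y : H) {ιrx : Type*} (rx : Coalgebra.Repr k x ιrx) {ιry : Type*} (ry : Coalgebra.Repr k y ιry) :
    Δ (x * y) =
      ∑ i ∈ rx.index, ∑ j ∈ ry.index,
        (rx.left i * ry.left j) ⊗ₜ[k] (rx.right i * ry.right j) := by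
  rw [Bialgebra.comul_mul, ← rx.eq, ← ry.eq, Finset.sum_mul_sum]
  simp only [Algebra.TensorProduct.tmul_mul_tmul]

lemma sum_antipode_mul_mul (x y : H) {ιrx : Type*} (rx : Coalgebra.Repr k x ιrx) {ιry : Type*} (ry : Coalgebra.Repr k y ιry) :
    ∑ i ∈ rx.index, ∑ j ∈ ry.index,
      S' (rx.left i * ry.left j) * (rx.right i * ry.right j) =
      algebraMap k H (ε x * ε y) := by
  have h := HopfAlgebra.mul_antipode_rTensor_comul_apply (R := k) (a := x * y)
  rw [comul_mul_repr x y rx ry, Bialgebra.counit_mul] at h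
  simpa only [map_sum, LinearMap.rTensor_tmul, LinearMap.mul'_apply] using h

lemma sum4_comm {M : Type*} [AddCommMonoid M] {α β : Type*} {γ : α → Type*} {δ : β → Type*}
    (A : Finset α) (B : Finset β) (C : ∀ a, Finset (γ a)) (D : ∀ b, Finset (δ b))
    (f : ∀ (a : α), γ a → ∀ (b : β), δ b → M) :
    ∑ a ∈ A, ∑ c ∈ C a, ∑ b ∈ B, ∑ d ∈ D b, f a c b d
      = ∑ b ∈ B, ∑ d ∈ D b, ∑ a ∈ A, ∑ c ∈ C a, f a c b d := by
  calc ∑ a ∈ A, ∑ c ∈ C a, ∑ b ∈ B, ∑ d ∈ D b, f a c b d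
      = ∑ a ∈ A, ∑ b ∈ B, ∑ c ∈ C a, ∑ d ∈ D b, f a c b d :=
        Finset.sum_congr rfl fun a _ => Finset.sum_comm
    _ = ∑ b ∈ B, ∑ a ∈ A, ∑ c ∈ C a, ∑ d ∈ D b, f a c b d := Finset.sum_comm
    _ = ∑ b ∈ B, ∑ a ∈ A, ∑ d ∈ D b, ∑ c ∈ C a, f a c b d :=
        Finset.sum_congr rfl fun b _ => Finset.sum_congr rfl fun a _ => Finset.sum_comm
    _ = ∑ b ∈ B, ∑ d ∈ D b, ∑ a ∈ A, ∑ c ∈ C a, f a c b d :=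
        Finset.sum_congr rfl fun b _ => Finset.sum_comm

/-- multiply three, right-nested, generic algebra -/
noncomputable def μ3 (k : Type*) (B : Type*) [CommSemiring k] [Semiring B] [Algebra k B] :
    B ⊗[k] (B ⊗[k] B) →ₗ[k] B :=
  LinearMap.mul' k B ∘ₗ (LinearMap.mul' k B).lTensor B

@[simp] lemma μ3_tmul {k B : Type*} [CommSemiring k] [Semiring B] [Algebra k B] (x y z : B) :
    μ3 k B (x ⊗ₜ[k] (y ⊗ₜ[k] z)) = x * (y * z) := by
  simp [μ3]

lemma antipode_mul' (x y : H) : S' (x * y) = S' y * S' x := by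
  classical
  set rx := ℛ k x with hrx
  set ry := ℛ k y with hry
  set ux : (i : rx.ι) → Coalgebra.Repr k (rx.left i) (H × H) := fun i => ℛ k (rx.left i) with hux
  set sx : (i : rx.ι) → Coalgebra.Repr k (rx.right i) (H × H) := fun i => ℛ k (rx.right i) with hsx
  set uy : (j : ry.ι) → Coalgebra.Repr k (ry.left j) (H × H) := fun j => ℛ k (ry.left j) with huy
  set sy : (j : ry.ι) → Coalgebra.Repr k (ry.right j) (H × H) := fun j => ℛ k (ry.right j) with hsy
  -- Step 1 : fully fine-left double expansion evaluates to S' y * S' x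
  have step1 :
      (∑ i ∈ rx.index, ∑ m ∈ (ux i).index, ∑ j ∈ ry.index, ∑ n ∈ (uy j).index,
        S' ((ux i).left m * (uy j).left n) *
          (((ux i).right m * (uy j).right n) * (S' (ry.right j) * S' (rx.right i)))) =
      S' y * S' x := by
    have collapse : ∀ i ∈ rx.index, ∀ j ∈ ry.index,
        (∑ m ∈ (ux i).index, ∑ n ∈ (uy j).index,
          S' ((ux i).left m * (uy j).left n) *
            (((ux i).right m * (uy j).right n) * (S' (ry.right j) * S' (rx.right i)))) =
        (ε (rx.left i) * ε (ry.left j)) • (S' (ry.right j) * S' (rx.right i)) := by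
      intro i _ j _
      have h := sum_antipode_mul_mul (rx.left i) (ry.left j) (ux i) (uy j)
      calc (∑ m ∈ (ux i).index, ∑ n ∈ (uy j).index,
              S' ((ux i).left m * (uy j).left n) *
                (((ux i).right m * (uy j).right n) * (S' (ry.right j) * S' (rx.right i))))
          = (∑ m ∈ (ux i).index, ∑ n ∈ (uy j).index,
              S' ((ux i).left m * (uy j).left n) *
                ((ux i).right m * (uy j).right n)) * (S' (ry.right j) * S' (rx.right i)) := by
            rw [Finset.sum_mul]
            exact Finset.sum_congr rfl fun m _ => by
              rw [Finset.sum_mul]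
              exact Finset.sum_congr rfl fun n _ => (mul_assoc _ _ _).symm
        _ = (ε (rx.left i) * ε (ry.left j)) • (S' (ry.right j) * S' (rx.right i)) := by
            rw [h, ← Algebra.smul_def]
    calc (∑ i ∈ rx.index, ∑ m ∈ (ux i).index, ∑ j ∈ ry.index, ∑ n ∈ (uy j).index,
            S' ((ux i).left m * (uy j).left n) *
              (((ux i).right m * (uy j).right n) * (S' (ry.right j) * S' (rx.right i))))
        = ∑ i ∈ rx.index, ∑ j ∈ ry.index, ∑ m ∈ (ux i).index, ∑ n ∈ (uy j).index,
            S' ((ux i).left m * (uy j).left n) *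
              (((ux i).right m * (uy j).right n) * (S' (ry.right j) * S' (rx.right i))) :=
          Finset.sum_congr rfl fun i _ => Finset.sum_comm
      _ = ∑ i ∈ rx.index, ∑ j ∈ ry.index,
            (ε (rx.left i) * ε (ry.left j)) • (S' (ry.right j) * S' (rx.right i)) :=
          Finset.sum_congr rfl fun i hi => Finset.sum_congr rfl fun j hj => collapse i hi j hj
      _ = (∑ j ∈ ry.index, ε (ry.left j) • S' (ry.right j)) *
            (∑ i ∈ rx.index, ε (rx.left i) • S' (rx.right i)) := by
          rw [Finset.sum_mul_sum, Finset.sum_comm]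
          refine Finset.sum_congr rfl fun i _ => Finset.sum_congr rfl fun j _ => ?_
          rw [smul_mul_assoc, mul_smul_comm, smul_smul, mul_comm]
      _ = S' y * S' x := by
          congr 1
          · have h := congrArg S' (sum_smul_left_eq y ry)
            simpa only [map_sum, map_smul] using h
          · have h := congrArg S' (sum_smul_left_eq x rx)
            simpa only [map_sum, map_smul] using h
  -- Step 2 : switch the y-grouping (fine-left to fine-right), per fixed (i, m)
  have step2 : ∀ (i : rx.ι) (m : (ux i).ι),
      (∑ j ∈ ry.index, ∑ n ∈ (uy j).index,
        S' ((ux i).left m * (uy j).left n) *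
          (((ux i).right m * (uy j).right n) * (S' (ry.right j) * S' (rx.right i)))) =
      (∑ j ∈ ry.index, ∑ q ∈ (sy j).index,
        S' ((ux i).left m * ry.left j) *
          (((ux i).right m * (sy j).left q) * (S' ((sy j).right q) * S' (rx.right i)))) := by
    intro i m
    have T := sum_tmul_tmul_eq ry uy sy
    have h := congrArg (μ3 k H ∘ₗ TensorProduct.map (S' ∘ₗ LinearMap.mulLeft k ((ux i).left m))
      (TensorProduct.map (LinearMap.mulLeft k ((ux i).right m))
        (LinearMap.mulRight k (S' (rx.right i)) ∘ₗ S'))) T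
    simpa only [map_sum, LinearMap.coe_comp, Function.comp_apply, TensorProduct.map_tmul,
      LinearMap.mulLeft_apply, LinearMap.mulRight_apply, μ3_tmul] using h
  -- Step 3 : switch the x-grouping, per fixed (j, q)
  have step3 : ∀ (j : ry.ι) (q : (sy j).ι),
      (∑ i ∈ rx.index, ∑ m ∈ (ux i).index,
        S' ((ux i).left m * ry.left j) *
          (((ux i).right m * (sy j).left q) * (S' ((sy j).right q) * S' (rx.right i)))) =
      (∑ i ∈ rx.index, ∑ p ∈ (sx i).index,
        S' (rx.left i * ry.left j) *
          (((sx i).left p * (sy j).left q) * (S' ((sy j).right q) * S' ((sx i).right p)))) := by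
    intro j q
    have T := sum_tmul_tmul_eq rx ux sx
    have h := congrArg (μ3 k H ∘ₗ TensorProduct.map (S' ∘ₗ LinearMap.mulRight k (ry.left j))
      (TensorProduct.map (LinearMap.mulRight k ((sy j).left q))
        (LinearMap.mulLeft k (S' ((sy j).right q)) ∘ₗ S'))) T
    simpa only [map_sum, LinearMap.coe_comp, Function.comp_apply, TensorProduct.map_tmul,
      LinearMap.mulLeft_apply, LinearMap.mulRight_apply, μ3_tmul] using h
  -- Step 4 : evaluate the fully fine-right expansion to S' (x * y)
  have step4 :
      (∑ j ∈ ry.index, ∑ i ∈ rx.index, ∑ p ∈ (sx i).index, ∑ q ∈ (sy j).index,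
        S' (rx.left i * ry.left j) *
          (((sx i).left p * (sy j).left q) * (S' ((sy j).right q) * S' ((sx i).right p)))) =
      S' (x * y) := by
    have inner : ∀ (j : ry.ι) (i : rx.ι) (p : (sx i).ι),
        (∑ q ∈ (sy j).index,
          S' (rx.left i * ry.left j) *
            (((sx i).left p * (sy j).left q) * (S' ((sy j).right q) * S' ((sx i).right p)))) =
        ε (ry.right j) • (S' (rx.left i * ry.left j) * ((sx i).left p * S' ((sx i).right p))) := by
      intro j i p
      have e1 : ∀ q ∈ (sy j).index,
          S' (rx.left i * ry.left j) *
            (((sx i).left p * (sy j).left q) * (S' ((sy j).right q) * S' ((sx i).right p))) =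
          S' (rx.left i * ry.left j) *
            ((sx i).left p * ((sy j).left q * (S' ((sy j).right q) * S' ((sx i).right p)))) := by
        intro q _
        simp only [mul_assoc]
      rw [Finset.sum_congr rfl e1, ← Finset.mul_sum, ← Finset.mul_sum]
      have e2 : (∑ q ∈ (sy j).index,
          (sy j).left q * (S' ((sy j).right q) * S' ((sx i).right p))) =
          (algebraMap k H (ε (ry.right j))) * S' ((sx i).right p) := by
        rw [← HopfAlgebra.sum_mul_antipode_eq_algebraMap_counit (sy j), Finset.sum_mul]
        exact Finset.sum_congr rfl fun q _ => (mul_assoc _ _ _).symm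
      rw [e2, ← Algebra.smul_def, mul_smul_comm, mul_smul_comm]
    calc (∑ j ∈ ry.index, ∑ i ∈ rx.index, ∑ p ∈ (sx i).index, ∑ q ∈ (sy j).index,
            S' (rx.left i * ry.left j) *
              (((sx i).left p * (sy j).left q) * (S' ((sy j).right q) * S' ((sx i).right p))))
        = ∑ j ∈ ry.index, ∑ i ∈ rx.index, ∑ p ∈ (sx i).index,
            ε (ry.right j) • (S' (rx.left i * ry.left j) * ((sx i).left p * S' ((sx i).right p))) :=
          Finset.sum_congr rfl fun j _ => Finset.sum_congr rfl fun i _ =>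
            Finset.sum_congr rfl fun p _ => inner j i p
      _ = ∑ j ∈ ry.index, ∑ i ∈ rx.index,
            ε (ry.right j) • (ε (rx.right i) • S' (rx.left i * ry.left j)) := by
          refine Finset.sum_congr rfl fun j _ => Finset.sum_congr rfl fun i _ => ?_
          rw [← Finset.smul_sum, ← Finset.mul_sum, sum_mul_antipode_eq_algebraMap_counit (sx i),
            Algebra.smul_def (ε (rx.right i)) _, ← Algebra.commutes, ← Algebra.smul_def]
      _ = ∑ j ∈ ry.index, ε (ry.right j) • S' (x * ry.left j) := by
          refine Finset.sum_congr rfl fun j _ => ?_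
          rw [← Finset.smul_sum]
          congr 1
          have : (∑ i ∈ rx.index, ε (rx.right i) • S' (rx.left i * ry.left j)) =
              S' ((∑ i ∈ rx.index, ε (rx.right i) • rx.left i) * ry.left j) := by
            rw [Finset.sum_mul, map_sum]
            exact Finset.sum_congr rfl fun i _ => by rw [smul_mul_assoc, map_smul]
          rw [this, sum_smul_right_eq x rx]
      _ = S' (x * y) := by
          have : (∑ j ∈ ry.index, ε (ry.right j) • S' (x * ry.left j)) =
              S' (x * (∑ j ∈ ry.index, ε (ry.right j) • ry.left j)) := by
            rw [Finset.mul_sum, map_sum]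
            exact Finset.sum_congr rfl fun j _ => by rw [mul_smul_comm, map_smul]
          rw [this, sum_smul_right_eq y ry]
  -- assemble
  rw [← step4, ← step1]
  refine Eq.symm ?_
  calc (∑ i ∈ rx.index, ∑ m ∈ (ux i).index, ∑ j ∈ ry.index, ∑ n ∈ (uy j).index,
          S' ((ux i).left m * (uy j).left n) *
            (((ux i).right m * (uy j).right n) * (S' (ry.right j) * S' (rx.right i))))
      = ∑ i ∈ rx.index, ∑ m ∈ (ux i).index, ∑ j ∈ ry.index, ∑ q ∈ (sy j).index,
          S' ((ux i).left m * ry.left j) *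
            (((ux i).right m * (sy j).left q) * (S' ((sy j).right q) * S' (rx.right i))) :=
        Finset.sum_congr rfl fun i _ => Finset.sum_congr rfl fun m _ => step2 i m
    _ = ∑ j ∈ ry.index, ∑ q ∈ (sy j).index, ∑ i ∈ rx.index, ∑ m ∈ (ux i).index,
          S' ((ux i).left m * ry.left j) *
            (((ux i).right m * (sy j).left q) * (S' ((sy j).right q) * S' (rx.right i))) := by
        exact sum4_comm _ _ _ _ _
    _ = ∑ j ∈ ry.index, ∑ q ∈ (sy j).index, ∑ i ∈ rx.index, ∑ p ∈ (sx i).index,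
          S' (rx.left i * ry.left j) *
            (((sx i).left p * (sy j).left q) * (S' ((sy j).right q) * S' ((sx i).right p))) :=
        Finset.sum_congr rfl fun j _ => Finset.sum_congr rfl fun q _ => step3 j q
    _ = ∑ j ∈ ry.index, ∑ i ∈ rx.index, ∑ p ∈ (sx i).index, ∑ q ∈ (sy j).index,
          S' (rx.left i * ry.left j) *
            (((sx i).left p * (sy j).left q) * (S' ((sy j).right q) * S' ((sx i).right p))) := by
        refine Finset.sum_congr rfl fun j _ => ?_
        calc (∑ q ∈ (sy j).index, ∑ i ∈ rx.index, ∑ p ∈ (sx i).index,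
                S' (rx.left i * ry.left j) *
                  (((sx i).left p * (sy j).left q) * (S' ((sy j).right q) * S' ((sx i).right p))))
            = ∑ i ∈ rx.index, ∑ q ∈ (sy j).index, ∑ p ∈ (sx i).index,
                S' (rx.left i * ry.left j) *
                  (((sx i).left p * (sy j).left q) * (S' ((sy j).right q) * S' ((sx i).right p))) :=
              Finset.sum_comm
          _ = ∑ i ∈ rx.index, ∑ p ∈ (sx i).index, ∑ q ∈ (sy j).index,
                S' (rx.left i * ry.left j) *
                  (((sx i).left p * (sy j).left q) * (S' ((sy j).right q) * S' ((sx i).right p))) :=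
              Finset.sum_congr rfl fun i _ => Finset.sum_comm

/-- the candidate for `Δ ∘ S'`: `(S' ⊗ S') ∘ τ ∘ Δ` -/
noncomputable def gMap (k : Type*) {H : Type*} [Field k] [Ring H] [HopfAlgebra k H] :
    H →ₗ[k] H ⊗[k] H :=
  (TensorProduct.map (HopfAlgebra.antipode (R := k)) (HopfAlgebra.antipode (R := k))) ∘ₗ
    (TensorProduct.comm k H H).toLinearMap ∘ₗ Coalgebra.comul

lemma gMap_repr (a : H) {ιr : Type*} (r : Coalgebra.Repr k a ιr) :
    gMap k a = ∑ i ∈ r.index, S' (r.right i) ⊗ₜ[k] S' (r.left i) := by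
  simp only [gMap, LinearMap.coe_comp, Function.comp_apply, LinearEquiv.coe_coe, ← r.eq,
    map_sum, TensorProduct.comm_tmul, TensorProduct.map_tmul]

/-- key computation: `Δ ⋆ gMap = unit` pointwise -/
lemma sum_comul_mul_gMap (h : H) {ιr : Type*} (r : Coalgebra.Repr k h ιr) :
    ∑ i ∈ r.index, Δ (r.left i) * gMap k (r.right i) = algebraMap k (H ⊗[k] H) (ε h) := by
  classical
  set s : (i : r.ι) → Coalgebra.Repr k (r.right i) (H × H) := fun i => ℛ k (r.right i) with hs
  set u : (i : r.ι) → Coalgebra.Repr k (r.left i) (H × H) := fun i => ℛ k (r.left i) with hu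
  -- Ξ : x ⊗ (y ⊗ z) ↦ (x ⊗ y) * gMap z
  set Ξ : H ⊗[k] (H ⊗[k] H) →ₗ[k] H ⊗[k] H :=
    LinearMap.mul' k (H ⊗[k] H) ∘ₗ
      (TensorProduct.assoc k H H (H ⊗[k] H)).symm.toLinearMap ∘ₗ
        (((gMap k).lTensor H).lTensor H) with hΞ
  have Ξtmul : ∀ (x y z : H), Ξ (x ⊗ₜ[k] (y ⊗ₜ[k] z)) = (x ⊗ₜ[k] y) * gMap k z := by
    intro x y z
    simp only [hΞ, LinearMap.coe_comp, Function.comp_apply, LinearMap.lTensor_tmul,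
      LinearEquiv.coe_coe, TensorProduct.assoc_symm_tmul, LinearMap.mul'_apply]
  have T := sum_tmul_tmul_eq r u s
  have hT := congrArg Ξ T
  simp only [map_sum, Ξtmul] at hT
  -- LHS of hT is our sum
  have e1 : (∑ i ∈ r.index, ∑ m ∈ (u i).index,
      ((u i).left m ⊗ₜ[k] (u i).right m) * gMap k (r.right i)) =
      ∑ i ∈ r.index, Δ (r.left i) * gMap k (r.right i) := by
    refine Finset.sum_congr rfl fun i _ => ?_
    rw [← Finset.sum_mul, (u i).eq]
  rw [e1] at hT
  rw [hT]
  -- now evaluate the right-hand side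
  have e2 : ∀ i ∈ r.index,
      (∑ q ∈ (s i).index, (r.left i ⊗ₜ[k] (s i).left q) * gMap k ((s i).right q)) =
      (r.left i * S' (r.right i)) ⊗ₜ[k] (1 : H) := by
    intro i _
    set v : (q : (s i).ι) → Coalgebra.Repr k ((s i).left q) (H × H) := fun q => ℛ k ((s i).left q) with hv
    set w : (q : (s i).ι) → Coalgebra.Repr k ((s i).right q) (H × H) := fun q => ℛ k ((s i).right q) with hw
    -- Ξ2 : x ⊗ (y ⊗ z) ↦ (c * S' z) ⊗ (x * S' y), c := r.left i
    set Ξ2 : H ⊗[k] (H ⊗[k] H) →ₗ[k] H ⊗[k] H :=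
      (TensorProduct.map (LinearMap.mulLeft k (r.left i) ∘ₗ S')
        (LinearMap.mul' k H ∘ₗ (LinearMap.lTensor H (HopfAlgebra.antipode (R := k) (A := H))))) ∘ₗ
        (TensorProduct.comm k (H ⊗[k] H) H).toLinearMap ∘ₗ
          (TensorProduct.assoc k H H H).symm.toLinearMap with hΞ2
    have Ξ2tmul : ∀ (x y z : H),
        Ξ2 (x ⊗ₜ[k] (y ⊗ₜ[k] z)) = (r.left i * S' z) ⊗ₜ[k] (x * S' y) := by
      intro x y z
      simp only [hΞ2, LinearMap.coe_comp, Function.comp_apply, LinearEquiv.coe_coe,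
        TensorProduct.assoc_symm_tmul, TensorProduct.comm_tmul, TensorProduct.map_tmul,
        LinearMap.mulLeft_apply, LinearMap.lTensor_tmul, LinearMap.mul'_apply]
    have T2 := sum_tmul_tmul_eq (s i) v w
    have hT2 := congrArg Ξ2 T2
    simp only [map_sum, Ξ2tmul] at hT2
    -- RHS of hT2 equals our sum (after expanding gMap)
    have e3 : (∑ q ∈ (s i).index, ∑ n ∈ (w q).index,
        (r.left i * S' ((w q).right n)) ⊗ₜ[k] ((s i).left q * S' ((w q).left n))) =
        ∑ q ∈ (s i).index, (r.left i ⊗ₜ[k] (s i).left q) * gMap k ((s i).right q) := by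
      refine Finset.sum_congr rfl fun q _ => ?_
      rw [gMap_repr ((s i).right q) (w q), Finset.mul_sum]
      exact Finset.sum_congr rfl fun n _ => by
        rw [Algebra.TensorProduct.tmul_mul_tmul]
    rw [e3] at hT2
    rw [← hT2]
    -- evaluate the v-side
    have e4 : ∀ q ∈ (s i).index,
        (∑ n ∈ (v q).index,
          (r.left i * S' ((s i).right q)) ⊗ₜ[k] ((v q).left n * S' ((v q).right n))) =
        ε ((s i).left q) • ((r.left i * S' ((s i).right q)) ⊗ₜ[k] (1 : H)) := by
      intro q _
      rw [← TensorProduct.tmul_sum, sum_mul_antipode_eq_algebraMap_counit (v q), Algebra.algebraMap_eq_smul_one,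
        TensorProduct.tmul_smul]
    rw [Finset.sum_congr rfl e4]
    have e5 : (∑ q ∈ (s i).index,
        ε ((s i).left q) • ((r.left i * S' ((s i).right q)) ⊗ₜ[k] (1 : H))) =
        (r.left i * S' (∑ q ∈ (s i).index, ε ((s i).left q) • (s i).right q)) ⊗ₜ[k] (1 : H) := by
      simp only [map_sum, map_smul, Finset.mul_sum, mul_smul_comm, TensorProduct.sum_tmul,
        TensorProduct.smul_tmul']
    rw [e5, sum_smul_left_eq (r.right i) (s i)]
  rw [Finset.sum_congr rfl e2, ← TensorProduct.sum_tmul, sum_mul_antipode_eq_algebraMap_counit r,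
    Algebra.TensorProduct.algebraMap_apply]


lemma sum_comul_antipode_mul_comul (z : H) {ιu : Type*} (u : Coalgebra.Repr k z ιu) :
    ∑ m ∈ u.index, Δ (S' (u.left m)) * Δ (u.right m) = algebraMap k (H ⊗[k] H) (ε z) := by
  calc ∑ m ∈ u.index, Δ (S' (u.left m)) * Δ (u.right m)
      = ∑ m ∈ u.index, Δ (S' (u.left m) * u.right m) :=
        Finset.sum_congr rfl fun m _ => (Bialgebra.comul_mul _ _).symm
    _ = Δ (∑ m ∈ u.index, S' (u.left m) * u.right m) := (map_sum _ _ _).symm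
    _ = Δ (algebraMap k H (ε z)) := by rw [sum_antipode_mul_eq_algebraMap_counit u]
    _ = algebraMap k (H ⊗[k] H) (ε z) := by rw [Bialgebra.comul_algebraMap]

lemma comul_antipode (a : H) : Δ (S' a) = gMap k a := by
  classical
  set r := ℛ k a with hr
  set u : (i : r.ι) → Coalgebra.Repr k (r.left i) (H × H) := fun i => ℛ k (r.left i) with hu
  set s : (i : r.ι) → Coalgebra.Repr k (r.right i) (H × H) := fun i => ℛ k (r.right i) with hs
  set Θ : H ⊗[k] (H ⊗[k] H) →ₗ[k] H ⊗[k] H :=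
    μ3 k (H ⊗[k] H) ∘ₗ
      TensorProduct.map (Coalgebra.comul ∘ₗ (HopfAlgebra.antipode (R := k) (A := H)))
        (TensorProduct.map Coalgebra.comul (gMap k)) with hΘ
  have Θtmul : ∀ (x y z : H),
      Θ (x ⊗ₜ[k] (y ⊗ₜ[k] z)) = Δ (S' x) * (Δ y * gMap k z) := by
    intro x y z
    simp only [hΘ, LinearMap.coe_comp, Function.comp_apply, TensorProduct.map_tmul, μ3_tmul]
  have T := sum_tmul_tmul_eq r u s
  have hT := congrArg Θ T
  simp only [map_sum, Θtmul] at hT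
  have e1 : (∑ i ∈ r.index, ∑ m ∈ (u i).index,
      Δ (S' ((u i).left m)) * (Δ ((u i).right m) * gMap k (r.right i))) = gMap k a := by
    have inner : ∀ i ∈ r.index,
        (∑ m ∈ (u i).index,
          Δ (S' ((u i).left m)) * (Δ ((u i).right m) * gMap k (r.right i))) =
        ε (r.left i) • gMap k (r.right i) := by
      intro i _
      calc (∑ m ∈ (u i).index,
              Δ (S' ((u i).left m)) * (Δ ((u i).right m) * gMap k (r.right i)))
          = (∑ m ∈ (u i).index, Δ (S' ((u i).left m)) * Δ ((u i).right m)) *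
              gMap k (r.right i) := by
            rw [Finset.sum_mul]
            exact Finset.sum_congr rfl fun m _ => (mul_assoc _ _ _).symm
        _ = ε (r.left i) • gMap k (r.right i) := by
            rw [sum_comul_antipode_mul_comul (r.left i) (u i), ← Algebra.smul_def]
    rw [Finset.sum_congr rfl inner]
    have : (∑ x ∈ r.index, ε (r.left x) • gMap k (r.right x)) =
        gMap k (∑ x ∈ r.index, ε (r.left x) • r.right x) := by
      simp only [map_sum, map_smul]
    rw [this, sum_smul_left_eq a r]
  have e2 : (∑ i ∈ r.index, ∑ q ∈ (s i).index,
      Δ (S' (r.left i)) * (Δ ((s i).left q) * gMap k ((s i).right q))) = Δ (S' a) := by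
    have inner : ∀ i ∈ r.index,
        (∑ q ∈ (s i).index,
          Δ (S' (r.left i)) * (Δ ((s i).left q) * gMap k ((s i).right q))) =
        ε (r.right i) • Δ (S' (r.left i)) := by
      intro i _
      rw [← Finset.mul_sum, sum_comul_mul_gMap (r.right i) (s i), Algebra.smul_def,
        ← Algebra.commutes, ← Algebra.smul_def]
    rw [Finset.sum_congr rfl inner]
    have : (∑ i ∈ r.index, ε (r.right i) • Δ (S' (r.left i))) =
        Δ (S' (∑ i ∈ r.index, ε (r.right i) • r.left i)) := by
      simp only [map_sum, map_smul]
    rw [this, sum_smul_right_eq a r]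
  rw [e1, e2] at hT
  exact hT.symm

lemma comul_antipode_repr (a : H) {ιr : Type*} (r : Coalgebra.Repr k a ιr) :
    Δ (S' a) = ∑ i ∈ r.index, S' (r.right i) ⊗ₜ[k] S' (r.left i) := by
  rw [comul_antipode, gMap_repr a r]

section Integral

variable (Λ : H) (lam : H →ₗ[k] k)


/-- Fourier inversion: `b = ∑ λ(b Λ₍₁₎) S(Λ₍₂₎)` -/
theorem radford_I (hΛ : ∀ h : H, h * Λ = ε h • Λ)
    (hlam : ∀ h : H,
      (TensorProduct.lid k H) ((lam.rTensor H) (Δ h)) = lam h • (1 : H))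
    (hnorm : lam Λ = 1) (b : H) {ιrΛ : Type*} (rΛ : Coalgebra.Repr k Λ ιrΛ) :
    ∑ j ∈ rΛ.index, lam (b * rΛ.left j) • S' (rΛ.right j) = b := by
  classical
  set rb := ℛ k b with hrb
  set u : (j : rΛ.ι) → Coalgebra.Repr k (rΛ.left j) (H × H) := fun j => ℛ k (rΛ.left j) with hu
  set w : (j : rΛ.ι) → Coalgebra.Repr k (rΛ.right j) (H × H) := fun j => ℛ k (rΛ.right j) with hw
  have eval1 : ∀ j ∈ rΛ.index,
      (TensorProduct.lid k H) ((lam.rTensor H) (Δ (b * rΛ.left j))) * S' (rΛ.right j) =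
      lam (b * rΛ.left j) • S' (rΛ.right j) := by
    intro j _
    rw [hlam (b * rΛ.left j), smul_mul_assoc, one_mul]
  have eval2 : ∀ j ∈ rΛ.index,
      (TensorProduct.lid k H) ((lam.rTensor H) (Δ (b * rΛ.left j))) * S' (rΛ.right j) =
      ∑ p ∈ rb.index, ∑ m ∈ (u j).index,
        lam (rb.left p * (u j).left m) • ((rb.right p * (u j).right m) * S' (rΛ.right j)) := by
    intro j _
    rw [comul_mul_repr b (rΛ.left j) rb (u j)]
    simp only [map_sum, LinearMap.rTensor_tmul, TensorProduct.lid_tmul, Finset.sum_mul,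
      smul_mul_assoc]
  have key : (∑ j ∈ rΛ.index, ∑ p ∈ rb.index, ∑ m ∈ (u j).index,
      lam (rb.left p * (u j).left m) • ((rb.right p * (u j).right m) * S' (rΛ.right j))) = b := by
    rw [Finset.sum_comm]
    have perp : ∀ p ∈ rb.index,
        (∑ j ∈ rΛ.index, ∑ m ∈ (u j).index,
          lam (rb.left p * (u j).left m) • ((rb.right p * (u j).right m) * S' (rΛ.right j))) =
        ε (rb.left p) • rb.right p := by
      intro p _
      set χ : H ⊗[k] (H ⊗[k] H) →ₗ[k] H :=
        (TensorProduct.lid k H).toLinearMap ∘ₗ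
          TensorProduct.map (lam ∘ₗ LinearMap.mulLeft k (rb.left p))
            (LinearMap.mulLeft k (rb.right p) ∘ₗ LinearMap.mul' k H ∘ₗ
              LinearMap.lTensor H (HopfAlgebra.antipode (R := k) (A := H))) with hχ
      have χtmul : ∀ (x y z : H),
          χ (x ⊗ₜ[k] (y ⊗ₜ[k] z)) = lam (rb.left p * x) • (rb.right p * (y * S' z)) := by
        intro x y z
        simp only [hχ, LinearMap.coe_comp, Function.comp_apply, LinearEquiv.coe_coe,
          TensorProduct.map_tmul, LinearMap.mulLeft_apply, LinearMap.lTensor_tmul,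
          LinearMap.mul'_apply, TensorProduct.lid_tmul]
      have T := sum_tmul_tmul_eq rΛ u w
      have hT := congrArg χ T
      simp only [map_sum, χtmul] at hT
      have lhsfix : (∑ j ∈ rΛ.index, ∑ m ∈ (u j).index,
          lam (rb.left p * (u j).left m) • ((rb.right p * (u j).right m) * S' (rΛ.right j))) =
          ∑ j ∈ rΛ.index, ∑ m ∈ (u j).index,
            lam (rb.left p * (u j).left m) • (rb.right p * ((u j).right m * S' (rΛ.right j))) := by
        simp only [mul_assoc]
      rw [lhsfix, hT]
      have perj : ∀ j ∈ rΛ.index,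
          (∑ n ∈ (w j).index,
            lam (rb.left p * rΛ.left j) • (rb.right p * ((w j).left n * S' ((w j).right n)))) =
          (lam (rb.left p * rΛ.left j) * ε (rΛ.right j)) • rb.right p := by
        intro j _
        rw [← Finset.smul_sum, ← Finset.mul_sum, sum_mul_antipode_eq_algebraMap_counit (w j),
          Algebra.algebraMap_eq_smul_one, mul_smul_comm, mul_one, smul_smul]
      rw [Finset.sum_congr rfl perj]
      have : (∑ j ∈ rΛ.index, (lam (rb.left p * rΛ.left j) * ε (rΛ.right j)) • rb.right p) =
          lam (rb.left p * Λ) • rb.right p := by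
        rw [← Finset.sum_smul]
        congr 1
        calc (∑ j ∈ rΛ.index, lam (rb.left p * rΛ.left j) * ε (rΛ.right j))
            = lam (rb.left p * (∑ j ∈ rΛ.index, ε (rΛ.right j) • rΛ.left j)) := by
              rw [Finset.mul_sum, map_sum]
              exact Finset.sum_congr rfl fun j _ => by
                rw [mul_smul_comm, map_smul, smul_eq_mul, mul_comm]
          _ = lam (rb.left p * Λ) := by rw [sum_smul_right_eq Λ rΛ]
      rw [this, hΛ (rb.left p), map_smul, smul_eq_mul, hnorm, mul_one]
    rw [Finset.sum_congr rfl perp, sum_smul_left_eq b rb]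
  calc (∑ j ∈ rΛ.index, lam (b * rΛ.left j) • S' (rΛ.right j))
      = ∑ j ∈ rΛ.index, (TensorProduct.lid k H) ((lam.rTensor H) (Δ (b * rΛ.left j))) *
          S' (rΛ.right j) := (Finset.sum_congr rfl eval1).symm
    _ = ∑ j ∈ rΛ.index, ∑ p ∈ rb.index, ∑ m ∈ (u j).index,
          lam (rb.left p * (u j).left m) • ((rb.right p * (u j).right m) * S' (rΛ.right j)) :=
        Finset.sum_congr rfl eval2
    _ = b := key


theorem alpha_one (αH : H →ₗ[k] k) (hΛ0 : Λ ≠ 0)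
    (hαΛ : ∀ h : H, Λ * S' h = αH h • Λ) : αH 1 = 1 := by
  have h := hαΛ 1
  rw [antipode_one', mul_one] at h
  have : αH (1 : H) • Λ = (1 : k) • Λ := by rw [one_smul, ← h]
  exact smul_left_injective k hΛ0 this

theorem alpha_mul (αH : H →ₗ[k] k) (hΛ0 : Λ ≠ 0)
    (hαΛ : ∀ h : H, Λ * S' h = αH h • Λ) (x y : H) :
    αH (x * y) = αH x * αH y := by
  have h := hαΛ (x * y)
  rw [antipode_mul', ← mul_assoc, hαΛ y, smul_mul_assoc, hαΛ x, smul_smul] at h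
  have : αH (x * y) • Λ = (αH x * αH y) • Λ := by rw [← h, mul_comm]
  exact smul_left_injective k hΛ0 this

/-- the Casimir-type property of `∑ Λ₍₁₎ ⊗ S Λ₍₂₎` -/
theorem radford_C (hΛ : ∀ h : H, h * Λ = ε h • Λ) (x : H) {ιrΛ : Type*} (rΛ : Coalgebra.Repr k Λ ιrΛ) :
    ∑ j ∈ rΛ.index, (x * rΛ.left j) ⊗ₜ[k] S' (rΛ.right j) =
    ∑ j ∈ rΛ.index, rΛ.left j ⊗ₜ[k] (S' (rΛ.right j) * x) := by
  classical
  set rx := ℛ k x with hrx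
  set u : (p : rx.ι) → Coalgebra.Repr k (rx.left p) (H × H) := fun p => ℛ k (rx.left p) with hu
  set s : (p : rx.ι) → Coalgebra.Repr k (rx.right p) (H × H) := fun p => ℛ k (rx.right p) with hs
  -- step 1 : A = LHS
  have step1 : (∑ j ∈ rΛ.index, ∑ p ∈ rx.index, ∑ q ∈ (s p).index,
      (rx.left p * rΛ.left j) ⊗ₜ[k] (S' ((s p).left q * rΛ.right j) * (s p).right q)) =
      ∑ j ∈ rΛ.index, (x * rΛ.left j) ⊗ₜ[k] S' (rΛ.right j) := by
    refine Finset.sum_congr rfl fun j _ => ?_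
    have perp : ∀ p ∈ rx.index,
        (∑ q ∈ (s p).index,
          (rx.left p * rΛ.left j) ⊗ₜ[k] (S' ((s p).left q * rΛ.right j) * (s p).right q)) =
        ε (rx.right p) • ((rx.left p * rΛ.left j) ⊗ₜ[k] S' (rΛ.right j)) := by
      intro p _
      have e1 : ∀ q ∈ (s p).index,
          (rx.left p * rΛ.left j) ⊗ₜ[k] (S' ((s p).left q * rΛ.right j) * (s p).right q) =
          (rx.left p * rΛ.left j) ⊗ₜ[k] (S' (rΛ.right j) * (S' ((s p).left q) * (s p).right q)) := by
        intro q _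
        rw [antipode_mul', mul_assoc]
      rw [Finset.sum_congr rfl e1, ← TensorProduct.tmul_sum, ← Finset.mul_sum,
        sum_antipode_mul_eq_algebraMap_counit (s p), Algebra.algebraMap_eq_smul_one, mul_smul_comm, mul_one,
        TensorProduct.tmul_smul]
    rw [Finset.sum_congr rfl perp]
    have : (∑ p ∈ rx.index, ε (rx.right p) • ((rx.left p * rΛ.left j) ⊗ₜ[k] S' (rΛ.right j))) =
        ((∑ p ∈ rx.index, ε (rx.right p) • rx.left p) * rΛ.left j) ⊗ₜ[k] S' (rΛ.right j) := by
      simp only [Finset.sum_mul, TensorProduct.sum_tmul, smul_mul_assoc, TensorProduct.smul_tmul']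
    rw [this, sum_smul_right_eq x rx]
  -- step 2 : A = E (switch grouping per j)
  have step2 : ∀ j ∈ rΛ.index,
      (∑ p ∈ rx.index, ∑ q ∈ (s p).index,
        (rx.left p * rΛ.left j) ⊗ₜ[k] (S' ((s p).left q * rΛ.right j) * (s p).right q)) =
      ∑ p ∈ rx.index, ∑ m ∈ (u p).index,
        ((u p).left m * rΛ.left j) ⊗ₜ[k] (S' ((u p).right m * rΛ.right j) * rx.right p) := by
    intro j _
    have T := sum_tmul_tmul_eq rx u s
    have hT := congrArg (TensorProduct.map (LinearMap.mulRight k (rΛ.left j))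
      (LinearMap.mul' k H ∘ₗ LinearMap.rTensor H
        ((HopfAlgebra.antipode (R := k) (A := H)) ∘ₗ LinearMap.mulRight k (rΛ.right j)))) T
    simpa only [map_sum, TensorProduct.map_tmul, LinearMap.coe_comp, Function.comp_apply,
      LinearMap.mulRight_apply, LinearMap.rTensor_tmul, LinearMap.mul'_apply] using hT.symm
  -- step 3 : E = RHS
  have step3 : (∑ j ∈ rΛ.index, ∑ p ∈ rx.index, ∑ m ∈ (u p).index,
      ((u p).left m * rΛ.left j) ⊗ₜ[k] (S' ((u p).right m * rΛ.right j) * rx.right p)) =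
      ∑ j ∈ rΛ.index, rΛ.left j ⊗ₜ[k] (S' (rΛ.right j) * x) := by
    rw [Finset.sum_comm]
    have perp : ∀ p ∈ rx.index,
        (∑ j ∈ rΛ.index, ∑ m ∈ (u p).index,
          ((u p).left m * rΛ.left j) ⊗ₜ[k] (S' ((u p).right m * rΛ.right j) * rx.right p)) =
        ε (rx.left p) • ∑ j ∈ rΛ.index, rΛ.left j ⊗ₜ[k] (S' (rΛ.right j) * rx.right p) := by
      intro p _
      have base : (∑ m ∈ (u p).index, ∑ j ∈ rΛ.index,
          ((u p).left m * rΛ.left j) ⊗ₜ[k] ((u p).right m * rΛ.right j)) =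
          ε (rx.left p) • ∑ j ∈ rΛ.index, rΛ.left j ⊗ₜ[k] rΛ.right j := by
        rw [← comul_mul_repr (rx.left p) Λ (u p) rΛ, hΛ (rx.left p), map_smul]
        congr 1
        rw [← rΛ.eq]
      have hφ := congrArg (LinearMap.lTensor H
        (LinearMap.mulRight k (rx.right p) ∘ₗ (HopfAlgebra.antipode (R := k) (A := H)))) base
      simp only [map_sum, map_smul, LinearMap.lTensor_tmul, LinearMap.coe_comp,
        Function.comp_apply, LinearMap.mulRight_apply] at hφ
      rw [Finset.sum_comm] at hφ
      exact hφ
    rw [Finset.sum_congr rfl perp]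
    have : (∑ p ∈ rx.index,
        ε (rx.left p) • ∑ j ∈ rΛ.index, rΛ.left j ⊗ₜ[k] (S' (rΛ.right j) * rx.right p)) =
        ∑ j ∈ rΛ.index, rΛ.left j ⊗ₜ[k] (S' (rΛ.right j) *
          (∑ p ∈ rx.index, ε (rx.left p) • rx.right p)) := by
      simp only [Finset.smul_sum]
      rw [Finset.sum_comm]
      refine Finset.sum_congr rfl fun j _ => ?_
      simp only [Finset.mul_sum, TensorProduct.tmul_sum, mul_smul_comm, TensorProduct.tmul_smul]
    rw [this, sum_smul_left_eq x rx]
  rw [← step1, Finset.sum_congr rfl step2, step3]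


theorem lam_smul_one (hΛ : ∀ h : H, h * Λ = ε h • Λ)
    (hlam : ∀ h : H,
      (TensorProduct.lid k H) ((lam.rTensor H) (Δ h)) = lam h • (1 : H))
    (hnorm : lam Λ = 1) {ιrΛ : Type*} (rΛ : Coalgebra.Repr k Λ ιrΛ) :
    ∑ j ∈ rΛ.index, lam (rΛ.left j) • S' (rΛ.right j) = 1 := by
  have h := radford_I Λ lam hΛ hlam hnorm 1 rΛ
  simpa only [one_mul] using h

theorem lam_mul_d (hΛ : ∀ h : H, h * Λ = ε h • Λ)
    (hlam : ∀ h : H,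
      (TensorProduct.lid k H) ((lam.rTensor H) (Δ h)) = lam h • (1 : H))
    (hnorm : lam Λ = 1) (z : H) {ιrΛ : Type*} (rΛ : Coalgebra.Repr k Λ ιrΛ) :
    ∑ j ∈ rΛ.index, lam (z * rΛ.left j) * lam (S' (rΛ.right j)) = lam z := by
  have hC := radford_C Λ hΛ z rΛ
  have hω := congrArg (LinearMap.mul' k k ∘ₗ TensorProduct.map lam lam) hC
  simp only [map_sum, LinearMap.coe_comp, Function.comp_apply, TensorProduct.map_tmul,
    LinearMap.mul'_apply] at hω
  rw [hω]
  calc (∑ j ∈ rΛ.index, lam (rΛ.left j) * lam (S' (rΛ.right j) * z))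
      = lam ((∑ j ∈ rΛ.index, lam (rΛ.left j) • S' (rΛ.right j)) * z) := by
        rw [Finset.sum_mul, map_sum]
        exact Finset.sum_congr rfl fun j _ => by
          rw [smul_mul_assoc, map_smul, smul_eq_mul]
    _ = lam z := by rw [lam_smul_one Λ lam hΛ hlam hnorm rΛ, one_mul]

theorem d_eq_one [FiniteDimensional k H] (hΛ : ∀ h : H, h * Λ = ε h • Λ)
    (hlam : ∀ h : H,
      (TensorProduct.lid k H) ((lam.rTensor H) (Δ h)) = lam h • (1 : H))
    (hnorm : lam Λ = 1) {ιrΛ : Type*} (rΛ : Coalgebra.Repr k Λ ιrΛ) :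
    ∑ j ∈ rΛ.index, lam (S' (rΛ.right j)) • rΛ.left j = 1 := by
  classical
  set B : H →ₗ[k] H →ₗ[k] k := (LinearMap.mul k H).compr₂ lam with hB
  have hBapp : ∀ a b : H, B a b = lam (a * b) := fun a b => rfl
  have hinj : Function.Injective B := by
    rw [← LinearMap.ker_eq_bot, LinearMap.ker_eq_bot']
    intro m hm
    have h0 : ∀ x : H, lam (m * x) = 0 := by
      intro x
      have := congrArg (fun f : H →ₗ[k] k => f x) hm
      simpa [hBapp] using this
    have hI := radford_I Λ lam hΛ hlam hnorm m rΛ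
    rw [← hI]
    simp only [h0, zero_smul, Finset.sum_const_zero]
  have hfr : Module.finrank k H = Module.finrank k (H →ₗ[k] k) :=
    (Subspace.dual_finrank_eq (K := k) (V := H)).symm
  have hsurj : Function.Surjective B :=
    (LinearMap.injective_iff_surjective_of_finrank_eq_finrank hfr).mp hinj
  set dd : H := ∑ j ∈ rΛ.index, lam (S' (rΛ.right j)) • rΛ.left j with hdd
  have hlamdd : ∀ a : H, lam (a * dd) = lam a := by
    intro a
    rw [hdd, Finset.mul_sum, map_sum]
    calc (∑ j ∈ rΛ.index, lam (a * lam (S' (rΛ.right j)) • rΛ.left j))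
        = ∑ j ∈ rΛ.index, lam (a * rΛ.left j) * lam (S' (rΛ.right j)) := by
          refine Finset.sum_congr rfl fun j _ => ?_
          rw [mul_smul_comm, map_smul, smul_eq_mul, mul_comm]
      _ = lam a := lam_mul_d Λ lam hΛ hlam hnorm a rΛ
  have hzero : ∀ φ : Module.Dual k H, φ (dd - 1) = 0 := by
    intro φ
    obtain ⟨a, ha⟩ := hsurj φ
    rw [← ha]
    have : B a (dd - 1) = lam (a * dd) - lam (a * 1) := by
      rw [hBapp]
      rw [mul_sub, map_sub]
    rw [this, hlamdd a, mul_one, sub_self]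
  have := (Module.forall_dual_apply_eq_zero_iff k (dd - 1)).mp hzero
  exact sub_eq_zero.mp this


theorem GS (αH : H →ₗ[k] k) (hαΛ : ∀ h : H, Λ * S' h = αH h • Λ)
    (h : H) {ιrh : Type*} (rh : Coalgebra.Repr k h ιrh) {ιrΛ : Type*} (rΛ : Coalgebra.Repr k Λ ιrΛ) :
    ∑ j ∈ rΛ.index, ∑ i ∈ rh.index,
      (rΛ.left j * S' (rh.right i)) ⊗ₜ[k] S' (rΛ.right j * S' (rh.left i))
    = αH h • ∑ j ∈ rΛ.index, rΛ.left j ⊗ₜ[k] S' (rΛ.right j) := by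
  have base : (∑ j ∈ rΛ.index, ∑ i ∈ rh.index,
      (rΛ.left j * S' (rh.right i)) ⊗ₜ[k] (rΛ.right j * S' (rh.left i)))
      = αH h • ∑ j ∈ rΛ.index, rΛ.left j ⊗ₜ[k] rΛ.right j := by
    have h1 : Δ (Λ * S' h) = αH h • Δ Λ := by rw [hαΛ h, map_smul]
    rw [Bialgebra.comul_mul, comul_antipode_repr h rh, ← rΛ.eq] at h1
    rw [← h1, Finset.sum_mul_sum]
    simp only [Algebra.TensorProduct.tmul_mul_tmul]
  have hφ := congrArg (LinearMap.lTensor H (HopfAlgebra.antipode (R := k) (A := H))) base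
  simpa only [map_sum, map_smul, LinearMap.lTensor_tmul] using hφ

theorem R1 (αH : H →ₗ[k] k) (hΛ0 : Λ ≠ 0)
    (hαΛ : ∀ h : H, Λ * S' h = αH h • Λ)
    (b : H) {ιrb : Type*} (rb : Coalgebra.Repr k b ιrb) {ιrΛ : Type*} (rΛ : Coalgebra.Repr k Λ ιrΛ) :
    ∑ j ∈ rΛ.index, ∑ i ∈ rb.index, αH (S' (rb.left i)) •
        (rΛ.left j ⊗ₜ[k] (S' (S' (rb.right i)) * S' (rΛ.right j)))
    = ∑ j ∈ rΛ.index, (rΛ.left j * b) ⊗ₜ[k] S' (rΛ.right j) := by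
  classical
  set u : (i : rb.ι) → Coalgebra.Repr k (rb.left i) (H × H) := fun i => ℛ k (rb.left i) with hu
  set s : (i : rb.ι) → Coalgebra.Repr k (rb.right i) (H × H) := fun i => ℛ k (rb.right i) with hs
  -- rewrite the left side into "Inner" form
  have step0 : (∑ j ∈ rΛ.index, ∑ i ∈ rb.index, αH (S' (rb.left i)) •
      (rΛ.left j ⊗ₜ[k] (S' (S' (rb.right i)) * S' (rΛ.right j))))
      = ∑ i ∈ rb.index, αH (S' (rb.left i)) •
          ∑ j ∈ rΛ.index, rΛ.left j ⊗ₜ[k] S' (rΛ.right j * S' (rb.right i)) := by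
    rw [Finset.sum_comm]
    refine Finset.sum_congr rfl fun i _ => ?_
    rw [Finset.smul_sum]
    refine Finset.sum_congr rfl fun j _ => ?_
    rw [antipode_mul' (rΛ.right j) (S' (rb.right i))]
  rw [step0]
  -- claim A : compute Inner i
  have claimA : ∀ i ∈ rb.index,
      (∑ j ∈ rΛ.index, rΛ.left j ⊗ₜ[k] S' (rΛ.right j * S' (rb.right i)))
      = ∑ q ∈ (s i).index, αH ((s i).left q) •
          ∑ j ∈ rΛ.index, (rΛ.left j * (s i).right q) ⊗ₜ[k] S' (rΛ.right j) := by
    intro i _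
    set v : (q : (s i).ι) → Coalgebra.Repr k ((s i).left q) (H × H) := fun q => ℛ k ((s i).left q) with hv
    set w : (q : (s i).ι) → Coalgebra.Repr k ((s i).right q) (H × H) := fun q => ℛ k ((s i).right q) with hw
    set Θ : H ⊗[k] (H ⊗[k] H) →ₗ[k] H ⊗[k] H :=
      ∑ j ∈ rΛ.index,
        (TensorProduct.map
          (LinearMap.mul' k H ∘ₗ LinearMap.rTensor H
            (LinearMap.mulLeft k (rΛ.left j) ∘ₗ (HopfAlgebra.antipode (R := k) (A := H))))
          ((HopfAlgebra.antipode (R := k) (A := H)) ∘ₗ LinearMap.mulLeft k (rΛ.right j) ∘ₗ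
            (HopfAlgebra.antipode (R := k) (A := H)))) ∘ₗ
          (TensorProduct.comm k H (H ⊗[k] H)).toLinearMap with hΘ
    have Θtmul : ∀ (x y z : H),
        Θ (x ⊗ₜ[k] (y ⊗ₜ[k] z)) =
          ∑ j ∈ rΛ.index, ((rΛ.left j * S' y) * z) ⊗ₜ[k] S' (rΛ.right j * S' x) := by
      intro x y z
      simp only [hΘ, LinearMap.coe_sum, Finset.sum_apply, LinearMap.coe_comp,
        Function.comp_apply, LinearEquiv.coe_coe, TensorProduct.comm_tmul,
        TensorProduct.map_tmul, LinearMap.rTensor_tmul, LinearMap.mulLeft_apply,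
        LinearMap.mul'_apply]
    have T := sum_tmul_tmul_eq (s i) v w
    have hT := congrArg Θ T
    simp only [map_sum, Θtmul] at hT
    -- evaluate the w-side (RHS of T) : gives Inner i
    have wside : (∑ q ∈ (s i).index, ∑ n ∈ (w q).index, ∑ j ∈ rΛ.index,
        ((rΛ.left j * S' ((w q).left n)) * (w q).right n) ⊗ₜ[k]
          S' (rΛ.right j * S' ((s i).left q)))
        = ∑ j ∈ rΛ.index, rΛ.left j ⊗ₜ[k] S' (rΛ.right j * S' (rb.right i)) := by
      have perq : ∀ q ∈ (s i).index,
          (∑ n ∈ (w q).index, ∑ j ∈ rΛ.index,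
            ((rΛ.left j * S' ((w q).left n)) * (w q).right n) ⊗ₜ[k]
              S' (rΛ.right j * S' ((s i).left q)))
          = ε ((s i).right q) •
              ∑ j ∈ rΛ.index, rΛ.left j ⊗ₜ[k] S' (rΛ.right j * S' ((s i).left q)) := by
        intro q _
        rw [Finset.sum_comm, Finset.smul_sum]
        refine Finset.sum_congr rfl fun j _ => ?_
        have : ∀ n ∈ (w q).index,
            ((rΛ.left j * S' ((w q).left n)) * (w q).right n) ⊗ₜ[k]
              S' (rΛ.right j * S' ((s i).left q))
            = (rΛ.left j * (S' ((w q).left n) * (w q).right n)) ⊗ₜ[k]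
              S' (rΛ.right j * S' ((s i).left q)) := by
          intro n _
          rw [mul_assoc]
        rw [Finset.sum_congr rfl this, ← TensorProduct.sum_tmul, ← Finset.mul_sum,
          sum_antipode_mul_eq_algebraMap_counit (w q), Algebra.algebraMap_eq_smul_one, mul_smul_comm, mul_one,
          TensorProduct.smul_tmul']
      rw [Finset.sum_congr rfl perq]
      simp only [Finset.smul_sum]
      rw [Finset.sum_comm]
      refine Finset.sum_congr rfl fun j _ => ?_
      calc (∑ q ∈ (s i).index,
              ε ((s i).right q) • (rΛ.left j ⊗ₜ[k] S' (rΛ.right j * S' ((s i).left q))))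
          = rΛ.left j ⊗ₜ[k] S' (rΛ.right j *
              S' (∑ q ∈ (s i).index, ε ((s i).right q) • (s i).left q)) := by
            simp only [map_sum, map_smul, Finset.mul_sum, mul_smul_comm,
              TensorProduct.tmul_sum, TensorProduct.tmul_smul]
        _ = rΛ.left j ⊗ₜ[k] S' (rΛ.right j * S' (rb.right i)) := by
            rw [sum_smul_right_eq (rb.right i) (s i)]
    -- evaluate the v-side (LHS of T) : gives the α-twisted sum
    have vside : (∑ q ∈ (s i).index, ∑ n ∈ (v q).index, ∑ j ∈ rΛ.index,
        ((rΛ.left j * S' ((v q).right n)) * (s i).right q) ⊗ₜ[k]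
          S' (rΛ.right j * S' ((v q).left n)))
        = ∑ q ∈ (s i).index, αH ((s i).left q) •
            ∑ j ∈ rΛ.index, (rΛ.left j * (s i).right q) ⊗ₜ[k] S' (rΛ.right j) := by
      refine Finset.sum_congr rfl fun q _ => ?_
      have hGS := GS Λ αH hαΛ ((s i).left q) (v q) rΛ
      have hmr := congrArg (LinearMap.rTensor H (LinearMap.mulRight k ((s i).right q))) hGS
      simp only [map_sum, map_smul, LinearMap.rTensor_tmul, LinearMap.mulRight_apply] at hmr
      rw [← hmr, Finset.sum_comm]
    rw [wside, vside] at hT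
    exact hT.symm
  have stepA : (∑ i ∈ rb.index, αH (S' (rb.left i)) •
      ∑ j ∈ rΛ.index, rΛ.left j ⊗ₜ[k] S' (rΛ.right j * S' (rb.right i)))
      = ∑ i ∈ rb.index, αH (S' (rb.left i)) •
          ∑ q ∈ (s i).index, αH ((s i).left q) •
            ∑ j ∈ rΛ.index, (rΛ.left j * (s i).right q) ⊗ₜ[k] S' (rΛ.right j) :=
    Finset.sum_congr rfl fun i hi => by rw [claimA i hi]
  rw [stepA]
  -- claim B : merge the two α's
  have claimB : (∑ i ∈ rb.index, αH (S' (rb.left i)) •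
      ∑ q ∈ (s i).index, αH ((s i).left q) •
        ∑ j ∈ rΛ.index, (rΛ.left j * (s i).right q) ⊗ₜ[k] S' (rΛ.right j))
      = ∑ i ∈ rb.index, ∑ q ∈ (s i).index, αH (S' (rb.left i) * (s i).left q) •
          ∑ j ∈ rΛ.index, (rΛ.left j * (s i).right q) ⊗ₜ[k] S' (rΛ.right j) := by
    refine Finset.sum_congr rfl fun i _ => ?_
    rw [Finset.smul_sum]
    refine Finset.sum_congr rfl fun q _ => ?_
    rw [smul_smul, ← alpha_mul Λ αH hΛ0 hαΛ]
  rw [claimB]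
  -- step C : final collapse via coassociativity
  set ρ : H ⊗[k] (H ⊗[k] H) →ₗ[k] H ⊗[k] H :=
    ∑ j ∈ rΛ.index,
      (TensorProduct.lid k (H ⊗[k] H)).toLinearMap ∘ₗ
        (TensorProduct.map
          (αH ∘ₗ LinearMap.mul' k H ∘ₗ
            LinearMap.rTensor H (HopfAlgebra.antipode (R := k) (A := H)))
          (((TensorProduct.mk k H H).flip (S' (rΛ.right j))) ∘ₗ
            LinearMap.mulLeft k (rΛ.left j))) ∘ₗ
          (TensorProduct.assoc k H H H).symm.toLinearMap with hρ
  have ρtmul : ∀ (x y z : H),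
      ρ (x ⊗ₜ[k] (y ⊗ₜ[k] z)) =
        ∑ j ∈ rΛ.index, αH (S' x * y) • ((rΛ.left j * z) ⊗ₜ[k] S' (rΛ.right j)) := by
    intro x y z
    simp only [hρ, LinearMap.coe_sum, Finset.sum_apply, LinearMap.coe_comp,
      Function.comp_apply, LinearEquiv.coe_coe, TensorProduct.assoc_symm_tmul,
      TensorProduct.map_tmul, LinearMap.rTensor_tmul, LinearMap.mul'_apply,
      LinearMap.mulLeft_apply, LinearMap.flip_apply, TensorProduct.mk_apply,
      TensorProduct.lid_tmul]
  have T' := sum_tmul_tmul_eq rb u s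
  have hT' := congrArg ρ T'
  simp only [map_sum, ρtmul] at hT'
  -- the RHS image of hT' equals our current goal LHS
  have rhsimg : (∑ i ∈ rb.index, ∑ q ∈ (s i).index, ∑ j ∈ rΛ.index,
      αH (S' (rb.left i) * (s i).left q) • ((rΛ.left j * (s i).right q) ⊗ₜ[k] S' (rΛ.right j)))
      = ∑ i ∈ rb.index, ∑ q ∈ (s i).index, αH (S' (rb.left i) * (s i).left q) •
          ∑ j ∈ rΛ.index, (rΛ.left j * (s i).right q) ⊗ₜ[k] S' (rΛ.right j) := by
    refine Finset.sum_congr rfl fun i _ => Finset.sum_congr rfl fun q _ => ?_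
    rw [Finset.smul_sum]
  -- the LHS image of hT' evaluates to the desired RHS
  have lhsimg : (∑ i ∈ rb.index, ∑ m ∈ (u i).index, ∑ j ∈ rΛ.index,
      αH (S' ((u i).left m) * (u i).right m) •
        ((rΛ.left j * rb.right i) ⊗ₜ[k] S' (rΛ.right j)))
      = ∑ j ∈ rΛ.index, (rΛ.left j * b) ⊗ₜ[k] S' (rΛ.right j) := by
    have peri : ∀ i ∈ rb.index,
        (∑ m ∈ (u i).index, ∑ j ∈ rΛ.index,
          αH (S' ((u i).left m) * (u i).right m) •
            ((rΛ.left j * rb.right i) ⊗ₜ[k] S' (rΛ.right j)))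
        = ε (rb.left i) • ∑ j ∈ rΛ.index, (rΛ.left j * rb.right i) ⊗ₜ[k] S' (rΛ.right j) := by
      intro i _
      rw [Finset.sum_comm, Finset.smul_sum]
      refine Finset.sum_congr rfl fun j _ => ?_
      rw [← Finset.sum_smul]
      congr 1
      calc (∑ m ∈ (u i).index, αH (S' ((u i).left m) * (u i).right m))
          = αH (∑ m ∈ (u i).index, S' ((u i).left m) * (u i).right m) := (map_sum _ _ _).symm
        _ = αH (algebraMap k H (ε (rb.left i))) := by rw [sum_antipode_mul_eq_algebraMap_counit (u i)]
        _ = ε (rb.left i) := by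
            rw [Algebra.algebraMap_eq_smul_one, map_smul, smul_eq_mul,
              alpha_one Λ αH hΛ0 hαΛ, mul_one]
    rw [Finset.sum_congr rfl peri]
    simp only [Finset.smul_sum]
    rw [Finset.sum_comm]
    refine Finset.sum_congr rfl fun j _ => ?_
    calc (∑ i ∈ rb.index, ε (rb.left i) • ((rΛ.left j * rb.right i) ⊗ₜ[k] S' (rΛ.right j)))
        = (rΛ.left j * (∑ i ∈ rb.index, ε (rb.left i) • rb.right i)) ⊗ₜ[k] S' (rΛ.right j) := by
          simp only [Finset.mul_sum, mul_smul_comm, TensorProduct.sum_tmul,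
            TensorProduct.smul_tmul']
      _ = (rΛ.left j * b) ⊗ₜ[k] S' (rΛ.right j) := by rw [sum_smul_left_eq b rb]
  rw [rhsimg] at hT'
  rw [← hT', lhsimg]

end Integral


end RadfordAux

open Coalgebra TensorProduct

/-- **Radford's formula.** Let `H` be a finite dimensional Hopf algebra over
`k`, `λ` a right integral on `H` with `λ(Λ) = 1` for a left cointegral `Λ`, and `αH` the
distinguished grouplike element of `H*`.  Then for all `a b ∈ H`,
`λ(ab) = αH(S(b₍₁₎)) λ(S²(b₍₂₎) a)` (stated for every representation
`Δ b = ∑ b₁ᵢ ⊗ b₂ᵢ` of the coproduct of `b`). -/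
theorem radford_formula_right_integral
    {k H : Type*} [Field k] [Ring H] [HopfAlgebra k H] [FiniteDimensional k H]
    (Λ : H) (hΛ0 : Λ ≠ 0)
    (hΛ : ∀ h : H, h * Λ = counit (R := k) h • Λ)
    (lam : H →ₗ[k] k)
    (hlam : ∀ h : H,
      (TensorProduct.lid k H) ((lam.rTensor H) (comul (R := k) h)) = lam h • (1 : H))
    (hnorm : lam Λ = 1)
    (αH : H →ₗ[k] k)
    (hαH : ∀ L : H, (∀ h : H, h * L = counit (R := k) h • L) →
        ∀ h : H, L * HopfAlgebra.antipode (R := k) h = αH h • L) :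
    ∀ (a b : H) (ι : Type) (s : Finset ι) (b1 b2 : ι → H),
      comul (R := k) b = ∑ i ∈ s, b1 i ⊗ₜ[k] b2 i →
      lam (a * b) =
        ∑ i ∈ s, αH (HopfAlgebra.antipode (R := k) (b1 i)) *
          lam (HopfAlgebra.antipode (R := k) (HopfAlgebra.antipode (R := k) (b2 i)) * a) := by
  intro a b ι s b1 b2 hcomul
  classical
  set rb : Coalgebra.Repr k b ι := ⟨s, b1, b2, hcomul.symm⟩ with hrb
  set rΛ := ℛ k Λ with hrΛ
  have hαΛ : ∀ h : H, Λ * HopfAlgebra.antipode (R := k) h = αH h • Λ := hαH Λ hΛ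
  have hR1 := RadfordAux.R1 Λ αH hΛ0 hαΛ b rb rΛ
  have hω := congrArg (LinearMap.mul' k k ∘ₗ
    TensorProduct.map (lam ∘ₗ LinearMap.mulLeft k a) lam) hR1
  simp only [map_sum, map_smul, LinearMap.coe_comp, Function.comp_apply,
    TensorProduct.map_tmul, LinearMap.mulLeft_apply, LinearMap.mul'_apply, smul_eq_mul] at hω
  -- right-hand side of the goal equals the LHS of hω
  have hI := RadfordAux.radford_I Λ lam hΛ hlam hnorm a rΛ
  have expand : ∀ i : ι,
      lam (HopfAlgebra.antipode (R := k) (HopfAlgebra.antipode (R := k) (b2 i)) * a) =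
      ∑ j ∈ rΛ.index, lam (a * rΛ.left j) *
        lam (HopfAlgebra.antipode (R := k) (HopfAlgebra.antipode (R := k) (b2 i)) *
          HopfAlgebra.antipode (R := k) (rΛ.right j)) := by
    intro i
    conv_lhs => rw [← hI]
    rw [Finset.mul_sum, map_sum]
    refine Finset.sum_congr rfl fun j _ => ?_
    rw [mul_smul_comm, map_smul, smul_eq_mul]
  have goalRHS : (∑ i ∈ s, αH (HopfAlgebra.antipode (R := k) (b1 i)) *
      lam (HopfAlgebra.antipode (R := k) (HopfAlgebra.antipode (R := k) (b2 i)) * a)) =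
      ∑ j ∈ rΛ.index, ∑ i ∈ s, αH (HopfAlgebra.antipode (R := k) (b1 i)) *
        (lam (a * rΛ.left j) *
          lam (HopfAlgebra.antipode (R := k) (HopfAlgebra.antipode (R := k) (b2 i)) *
            HopfAlgebra.antipode (R := k) (rΛ.right j))) := by
    rw [Finset.sum_comm]
    refine Finset.sum_congr rfl fun i _ => ?_
    rw [expand i, Finset.mul_sum]
  -- the RHS of hω equals lam (a * b)
  have hd := RadfordAux.d_eq_one Λ lam hΛ hlam hnorm rΛ
  have rhs_eval : (∑ j ∈ rΛ.index, lam (a * (rΛ.left j * b)) *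
      lam (HopfAlgebra.antipode (R := k) (rΛ.right j))) = lam (a * b) := by
    calc (∑ j ∈ rΛ.index, lam (a * (rΛ.left j * b)) *
            lam (HopfAlgebra.antipode (R := k) (rΛ.right j)))
        = lam (a * ((∑ j ∈ rΛ.index,
            lam (HopfAlgebra.antipode (R := k) (rΛ.right j)) • rΛ.left j) * b)) := by
          rw [Finset.sum_mul, Finset.mul_sum, map_sum]
          refine Finset.sum_congr rfl fun j _ => ?_
          rw [smul_mul_assoc, mul_smul_comm, map_smul, smul_eq_mul, mul_comm]
      _ = lam (a * b) := by rw [hd, one_mul]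
  rw [goalRHS]
  rw [← rhs_eval]
  exact hω.symm
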